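/- Let n ≥ 0 be an integer, b > 0 a real number, γ ∈ ℂ, and α, β ∈ ℂ with α + 1 + l ≠ 0 for every integer 0 ≤ l ≤ n−1. Then for all z, μ ∈ ℂ with Re z > 0 and Re μ > 0, ∫₀^b x^{z−1} · (b−x)^{μ−1} · P^{(α,β)}_n(1−γx) dx = ((α+1)^{(n)} · Γ(μ) · Γ(z) · b^{z+μ−1} / (n! · Γ(μ+z))) · Σ_{k=0}^{n} ((−n)^{(k)} · (n+α+β+1)^{(k)} · (z)^{(k)}) / ((α+1)^{(k)} · (μ+z)^{(k)} · k!) · (γb/2)^k. -/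

import Mathlib

namespace Stmt8

noncomputable section

open MeasureTheory

/-- Pochhammer symbol `(a)^{(k)} = a(a+1)⋯(a+k−1)`. -/
def pochN (a : ℂ) (k : ℕ) : ℂ := ∏ i ∈ Finset.range k, (a + i)

/-- Generalized binomial coefficient `C(w,k) = w(w−1)⋯(w−k+1)/k!`. -/
def genBinom (w : ℂ) (k : ℕ) : ℂ := (∏ i ∈ Finset.range k, (w - i)) / (Nat.factorial k : ℂ)

/-- Jacobi polynomial `P^{(α,β)}_n(x)`. -/
def jacobiP (n : ℕ) (α β x : ℂ) : ℂ :=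
  ∑ s ∈ Finset.range (n + 1),
    genBinom ((n : ℂ) + α) (n - s) * genBinom ((n : ℂ) + β) s *
      ((x - 1) / 2) ^ s * ((x + 1) / 2) ^ (n - s)

lemma pochN_zero (a : ℂ) : pochN a 0 = 1 := by simp [pochN]

lemma pochN_succ (a : ℂ) (k : ℕ) : pochN a (k+1) = pochN a k * (a + k) := by
  simp [pochN, Finset.prod_range_succ]

lemma pochN_add (a : ℂ) (m p : ℕ) : pochN a (m+p) = pochN a m * pochN (a + m) p := by
  simp only [pochN, Finset.prod_range_add]
  congr 1
  refine Finset.prod_congr rfl fun i _ => ?_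
  push_cast; ring

lemma cast_sub1 {k i : ℕ} (hi : i < k) : ((k - 1 - i : ℕ) : ℂ) = (k:ℂ) - 1 - i := by
  rw [Nat.sub_sub, Nat.cast_sub (by omega)]
  push_cast; ring

lemma pochN_reflect (a : ℂ) (k : ℕ) : pochN a k = (-1)^k * pochN (1 - a - k) k := by
  unfold pochN
  rw [← Finset.prod_range_reflect (fun i => a + i) k]
  have : ∀ i ∈ Finset.range k, (a + ((k - 1 - i : ℕ):ℂ)) = (-1) * (1 - a - k + i) := by
    intro i hi
    rw [Finset.mem_range] at hi
    rw [cast_sub1 hi]; ring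
  rw [Finset.prod_congr rfl this, Finset.prod_mul_distrib, Finset.prod_const, Finset.card_range]

lemma prod_desc (w : ℂ) (k : ℕ) : ∏ i ∈ Finset.range k, (w - i) = pochN (w - k + 1) k := by
  unfold pochN
  rw [← Finset.prod_range_reflect (fun i => w - k + 1 + i) k]
  refine Finset.prod_congr rfl fun i hi => ?_
  rw [Finset.mem_range] at hi
  rw [cast_sub1 hi]; ring

lemma pochN_ne_zero {a : ℂ} {k : ℕ} (h : ∀ i : ℕ, i < k → a + i ≠ 0) : pochN a k ≠ 0 :=
  Finset.prod_ne_zero_iff.mpr fun i hi => h i (Finset.mem_range.mp hi)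

lemma pochN_fact (m k : ℕ) : pochN ((m:ℂ)+1) k * (m.factorial : ℂ) = ((m+k).factorial : ℂ) := by
  induction k with
  | zero => simp [pochN_zero]
  | succ k ih =>
    rw [pochN_succ, mul_right_comm, ih]
    push_cast [← Nat.add_assoc, Nat.factorial_succ]
    ring

lemma Gamma_shift {w : ℂ} (hw : 0 < w.re) (k : ℕ) :
    Complex.Gamma (w + k) = pochN w k * Complex.Gamma w := by
  induction k with
  | zero => simp [pochN_zero]
  | succ k ih =>
    have hne : w + k ≠ 0 := by
      intro h
      have : (w + k).re = 0 := by rw [h]; simp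
      simp only [Complex.add_re, Complex.natCast_re] at this
      have : (0:ℝ) ≤ (k:ℝ) := Nat.cast_nonneg k
      linarith [Complex.add_re w k ▸ (by simp [Complex.natCast_re] : (w + (k:ℂ)).re = w.re + k)]
    have : w + ((k:ℂ)+1) = (w + k) + 1 := by ring
    rw [show ((k+1 : ℕ) : ℂ) = (k:ℂ) + 1 by push_cast; ring, this,
      Complex.Gamma_add_one _ hne, ih, pochN_succ]
    ring

lemma chu (x y : ℂ) (k : ℕ) : pochN (x+y) k
    = ∑ s ∈ Finset.range (k+1), (k.choose s : ℂ) * pochN x s * pochN y (k-s) := by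
  induction k with
  | zero => simp [pochN_zero]
  | succ k ih =>
    have key : ∀ s ∈ Finset.range (k+1),
        (k.choose s : ℂ) * pochN x s * pochN y (k-s) * (x + y + (k:ℂ))
        = (k.choose s : ℂ) * pochN x (s+1) * pochN y (k-s)
          + (k.choose s : ℂ) * pochN x s * pochN y ((k+1)-s) := by
      intro s hs
      rw [Finset.mem_range, Nat.lt_succ_iff] at hs
      have h2 : k + 1 - s = (k - s) + 1 := by omega
      rw [h2, pochN_succ, pochN_succ, Nat.cast_sub hs]
      ring
    rw [pochN_succ, ih, Finset.sum_mul, Finset.sum_congr rfl key, Finset.sum_add_distrib]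
    rw [Finset.sum_range_succ'
      (fun s => (((k+1).choose s : ℕ) : ℂ) * pochN x s * pochN y (k+1-s)) (k+1)]
    have e1 : ∀ s ∈ Finset.range (k+1),
        (((k+1).choose (s+1) : ℕ) : ℂ) * pochN x (s+1) * pochN y (k+1-(s+1))
        = (k.choose s : ℂ) * pochN x (s+1) * pochN y (k-s)
          + (k.choose (s+1) : ℂ) * pochN x (s+1) * pochN y (k-s) := by
      intro s _
      rw [Nat.choose_succ_succ, Nat.succ_sub_succ]
      push_cast; ring
    rw [Finset.sum_congr rfl e1, Finset.sum_add_distrib, add_assoc]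
    congr 1
    have h0 : ∑ s ∈ Finset.range (k+2), (k.choose s : ℂ) * pochN x s * pochN y (k+1-s)
        = ∑ s ∈ Finset.range (k+1), (k.choose s : ℂ) * pochN x s * pochN y (k+1-s) := by
      rw [Finset.sum_range_succ]
      simp
    rw [← h0, Finset.sum_range_succ'
      (fun s => ((k.choose s : ℕ):ℂ) * pochN x s * pochN y (k+1-s)) (k+1)]
    simp [pochN_zero, Nat.succ_sub_succ]

lemma tri (n : ℕ) (f : ℕ → ℕ → ℂ) :
    ∑ s ∈ Finset.range (n+1), ∑ j ∈ Finset.range (n+1-s), f s j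
    = ∑ k ∈ Finset.range (n+1), ∑ s ∈ Finset.range (k+1), f s (k-s) := by
  rw [Finset.sum_sigma', Finset.sum_sigma']
  refine Finset.sum_nbij' (fun p => ⟨p.1 + p.2, p.1⟩) (fun p => ⟨p.2, p.1 - p.2⟩) ?_ ?_ ?_ ?_ ?_
  · rintro ⟨s,j⟩ h
    simp only [Finset.mem_sigma, Finset.mem_range] at h ⊢
    omega
  · rintro ⟨k,s⟩ h
    simp only [Finset.mem_sigma, Finset.mem_range] at h ⊢
    omega
  · rintro ⟨s,j⟩ h
    simp only [Finset.mem_sigma, Finset.mem_range] at h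
    simp only [Sigma.mk.inj_iff]
    constructor
    · trivial
    · simp
  · rintro ⟨k,s⟩ h
    simp only [Finset.mem_sigma, Finset.mem_range] at h
    simp only [Sigma.mk.inj_iff]
    constructor
    · omega
    · exact heq_of_eq rfl
  · rintro ⟨s,j⟩ h
    simp


lemma fact_nz (m : ℕ) : ((m.factorial : ℕ) : ℂ) ≠ 0 :=
  Nat.cast_ne_zero.mpr (Nat.factorial_ne_zero m)

lemma coeff_key (n k : ℕ) (hk : k ≤ n) (α β : ℂ)
    (hα : ∀ l : ℕ, l < n → α + 1 + (l : ℂ) ≠ 0) :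
    ∑ s ∈ Finset.range (k+1),
        genBinom ((n:ℂ)+α) (n-s) * genBinom ((n:ℂ)+β) s * (((n-s).choose (k-s) : ℕ) : ℂ)
    = (-1)^k * (pochN (α+1) n * pochN (-(n:ℂ)) k * pochN ((n:ℂ)+α+β+1) k)
        / ((n.factorial : ℂ) * pochN (α+1) k * (k.factorial : ℂ)) := by
  have hpk : pochN (α+1) k ≠ 0 :=
    pochN_ne_zero fun i hi => hα i (lt_of_lt_of_le hi hk)
  have term_eq : ∀ s ∈ Finset.range (k+1),
      genBinom ((n:ℂ)+α) (n-s) * genBinom ((n:ℂ)+β) s * (((n-s).choose (k-s) : ℕ) : ℂ)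
      = (-1)^k * pochN (α+1+(k:ℂ)) (n-k) / (((n-k).factorial : ℂ) * (k.factorial : ℂ))
        * ((k.choose s : ℂ) * pochN (-(n:ℂ)-β) s * pochN (-α-(k:ℂ)) (k-s)) := by
    intro s hs
    rw [Finset.mem_range, Nat.lt_succ_iff] at hs
    have hsn : s ≤ n := le_trans hs hk
    have h1 : genBinom ((n:ℂ)+α) (n-s) = pochN (α+1+(s:ℂ)) (n-s) / (((n-s).factorial : ℕ) : ℂ) := by
      rw [genBinom, prod_desc]
      congr 2
      rw [Nat.cast_sub hsn]; ring
    have h2 : genBinom ((n:ℂ)+β) s = (-1)^s * pochN (-(n:ℂ)-β) s / ((s.factorial : ℕ) : ℂ) := by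
      rw [genBinom, prod_desc, pochN_reflect]
      congr 3
      ring
    have h3 : pochN (α+1+(s:ℂ)) (n-s)
        = ((-1)^(k-s) * pochN (-α-(k:ℂ)) (k-s)) * pochN (α+1+(k:ℂ)) (n-k) := by
      rw [show n-s = (k-s)+(n-k) by omega, pochN_add]
      congr 2
      · rw [pochN_reflect]
        congr 2
        rw [Nat.cast_sub hs]; ring
      · rw [Nat.cast_sub hs]; ring
    have h5 : (((n-s).choose (k-s) : ℕ) : ℂ) * (((k-s).factorial : ℂ) * ((n-k).factorial : ℂ))
        = (((n-s).factorial : ℕ) : ℂ) := by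
      have e := Nat.choose_mul_factorial_mul_factorial (show k-s ≤ n-s by omega)
      rw [show n-s-(k-s) = n-k by omega] at e
      push_cast [← e]; ring
    have h6 : ((k.choose s : ℕ):ℂ) * ((s.factorial : ℂ) * ((k-s).factorial : ℂ))
        = ((k.factorial : ℕ) : ℂ) := by
      have e := Nat.choose_mul_factorial_mul_factorial hs
      push_cast [← e]; ring
    have hsgn : ((-1:ℂ))^(k-s) * (-1)^s = (-1)^k := by
      rw [← pow_add]
      congr 1
      omega
    have hc1 : (((n-s).choose (k-s) : ℕ) : ℂ) ≠ 0 :=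
      Nat.cast_ne_zero.mpr (Nat.choose_pos (by omega)).ne'
    have hc2 : ((k.choose s : ℕ) : ℂ) ≠ 0 :=
      Nat.cast_ne_zero.mpr (Nat.choose_pos hs).ne'
    have h5' : (((n-s).choose (k-s) : ℕ) : ℂ)
        = (((n-s).factorial : ℕ) : ℂ) / (((k-s).factorial : ℂ) * ((n-k).factorial : ℂ)) := by
      rw [eq_div_iff (by exact mul_ne_zero (fact_nz _) (fact_nz _))]
      exact h5
    have h6' : ((k.choose s : ℕ) : ℂ)
        = ((k.factorial : ℕ) : ℂ) / ((s.factorial : ℂ) * ((k-s).factorial : ℂ)) := by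
      rw [eq_div_iff (by exact mul_ne_zero (fact_nz _) (fact_nz _))]
      exact h6
    rw [h1, h2, h3, h5', h6', ← hsgn]
    field_simp [fact_nz (n-s), fact_nz s, fact_nz (k-s), fact_nz (n-k), fact_nz k]
  rw [Finset.sum_congr rfl term_eq, ← Finset.mul_sum]
  have hchu := (chu (-(n:ℂ)-β) (-α-(k:ℂ)) k).symm
  rw [hchu]
  have hrefl : pochN (-(n:ℂ)-β + (-α-(k:ℂ))) k = (-1)^k * pochN ((n:ℂ)+α+β+1) k := by
    rw [pochN_reflect]
    congr 2
    ring
  have hsplit : pochN (α+1) n = pochN (α+1) k * pochN (α+1+(k:ℂ)) (n-k) := by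
    rw [show n = k+(n-k) by omega, pochN_add]
    rw [show k+(n-k) = n by omega]
  have hneg : pochN (-(n:ℂ)) k = (-1)^k * pochN (((n-k : ℕ):ℂ)+1) k := by
    rw [pochN_reflect]
    congr 2
    rw [Nat.cast_sub hk]; ring
  have hfac : pochN (((n-k : ℕ):ℂ)+1) k * (((n-k).factorial : ℕ) : ℂ) = ((n.factorial : ℕ) : ℂ) := by
    have := pochN_fact (n-k) k
    rwa [show n-k+k = n by omega] at this
  have hq : pochN (((n-k : ℕ):ℂ)+1) k ≠ 0 := by
    refine pochN_ne_zero fun i hi => ?_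
    have : ((((n-k) + 1 + i : ℕ)) : ℂ) ≠ 0 := Nat.cast_ne_zero.mpr (by omega)
    push_cast at this
    convert this using 1
  rw [hrefl, hsplit, hneg, ← hfac, div_mul_eq_mul_div]
  rw [div_eq_div_iff (mul_ne_zero (fact_nz _) (fact_nz _))
      (mul_ne_zero (mul_ne_zero (mul_ne_zero hq (fact_nz _)) hpk) (fact_nz _))]
  ring

lemma jacobi_expand (n : ℕ) (α β : ℂ)
    (hα : ∀ l : ℕ, l < n → α + 1 + (l : ℂ) ≠ 0) (t : ℂ) :
    jacobiP n α β (1 - 2*t)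
    = ∑ k ∈ Finset.range (n+1),
        (pochN (α+1) n * pochN (-(n:ℂ)) k * pochN ((n:ℂ)+α+β+1) k)
          / ((n.factorial : ℂ) * pochN (α+1) k * (k.factorial : ℂ)) * t^k := by
  have step1 : jacobiP n α β (1 - 2*t)
      = ∑ s ∈ Finset.range (n+1), ∑ j ∈ Finset.range (n+1-s),
          genBinom ((n:ℂ)+α) (n-s) * genBinom ((n:ℂ)+β) s * (((n-s).choose j : ℕ) : ℂ)
            * (-t)^(s+j) := by
    unfold jacobiP
    refine Finset.sum_congr rfl fun s hs => ?_
    rw [Finset.mem_range, Nat.lt_succ_iff] at hs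
    have e1 : (1 - 2*t - 1)/2 = -t := by ring
    have e2 : (1 - 2*t + 1)/2 = 1 - t := by ring
    rw [e1, e2]
    have e3 : (1 - t)^(n-s)
        = ∑ j ∈ Finset.range (n+1-s), (((n-s).choose j : ℕ) : ℂ) * (-t)^j := by
      rw [show (1 : ℂ) - t = -t + 1 by ring, add_pow, show n+1-s = (n-s)+1 by omega]
      refine Finset.sum_congr rfl fun j hj => ?_
      ring
    rw [e3, Finset.mul_sum]
    refine Finset.sum_congr rfl fun j hj => ?_
    rw [pow_add]
    ring
  rw [step1, tri]
  refine Finset.sum_congr rfl fun k hk => ?_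
  rw [Finset.mem_range, Nat.lt_succ_iff] at hk
  have e4 : ∀ s ∈ Finset.range (k+1),
      genBinom ((n:ℂ)+α) (n-s) * genBinom ((n:ℂ)+β) s * (((n-s).choose (k-s) : ℕ) : ℂ)
          * (-t)^(s+(k-s))
      = genBinom ((n:ℂ)+α) (n-s) * genBinom ((n:ℂ)+β) s * (((n-s).choose (k-s) : ℕ) : ℂ)
          * (-t)^k := by
    intro s hs
    rw [Finset.mem_range, Nat.lt_succ_iff] at hs
    rw [show s+(k-s) = k by omega]
  rw [Finset.sum_congr rfl e4, ← Finset.sum_mul, coeff_key n k hk α β hα, neg_pow]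
  have hsq : ((-1:ℂ))^k * (-1)^k = 1 := by
    rw [← pow_add, ← two_mul, pow_mul]
    norm_num
  linear_combination (pochN (α+1) n * pochN (-(n:ℂ)) k * pochN ((n:ℂ)+α+β+1) k
      / ((n.factorial : ℂ) * pochN (α+1) k * (k.factorial : ℂ)) * t^k) * hsq

lemma beta_integrableOn {b : ℝ} (hb : 0 < b) {w v : ℂ} (hw : 0 < w.re) (hv : 0 < v.re) :
    IntegrableOn (fun x : ℝ => (x:ℂ)^(w-1) * ((b:ℂ)-x)^(v-1)) (Set.Ioo 0 b) := by
  have II := Complex.betaIntegral_convergent hw hv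
  have II2 := II.comp_mul_right (c := b⁻¹)
  rw [show (0:ℝ)/b⁻¹ = 0 by simp, show (1:ℝ)/b⁻¹ = b by field_simp] at II2
  have II3 : IntegrableOn
      (fun x : ℝ => ((x * b⁻¹ : ℝ):ℂ)^(w-1) * (1-((x * b⁻¹ : ℝ):ℂ))^(v-1))
      (Set.Ioo 0 b) := II2.1.mono_set Set.Ioo_subset_Ioc_self
  have II4 := II3.const_mul ((b:ℂ)^(w-1) * (b:ℂ)^(v-1))
  refine (IntegrableOn.congr_fun II4 (fun x hx => ?_) measurableSet_Ioo)
  obtain ⟨hx0, hxb⟩ := hx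
  have hxb' : x * b⁻¹ ≤ 1 := by
    rw [← div_eq_mul_inv, div_le_one hb]
    exact hxb.le
  have hbne : (b:ℝ) ≠ 0 := hb.ne'
  have h1 : (x:ℂ) = ((b * (x * b⁻¹) : ℝ) : ℂ) := by
    rw [mul_comm x, ← mul_assoc, mul_inv_cancel₀ hbne, one_mul]
  have h2 : (b:ℂ) - x = ((b * (1 - x * b⁻¹) : ℝ) : ℂ) := by
    rw [mul_sub, mul_one, mul_comm x, ← mul_assoc, mul_inv_cancel₀ hbne, one_mul]
    push_cast
    ring
  have c1 : ((b * (x * b⁻¹) : ℝ) : ℂ)^(w-1) = (b:ℂ)^(w-1) * ((x*b⁻¹ : ℝ):ℂ)^(w-1) := by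
    rw [Complex.ofReal_mul]
    exact Complex.mul_cpow_ofReal_nonneg hb.le (by positivity) _
  have c2 : ((b * (1 - x * b⁻¹) : ℝ) : ℂ)^(v-1) = (b:ℂ)^(v-1) * ((1 - x*b⁻¹ : ℝ):ℂ)^(v-1) := by
    rw [Complex.ofReal_mul]
    exact Complex.mul_cpow_ofReal_nonneg hb.le (by linarith) _
  rw [h2, h1, c1, c2]
  have c3 : ((1 - x*b⁻¹ : ℝ):ℂ) = 1 - ((x*b⁻¹ : ℝ):ℂ) := by push_cast; ring
  rw [c3]
  ring

lemma beta_eval {b : ℝ} (hb : 0 < b) {w v : ℂ} (hw : 0 < w.re) (hv : 0 < v.re) :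
    ∫ x in Set.Ioo (0:ℝ) b, (x:ℂ)^(w-1) * ((b:ℂ)-x)^(v-1)
    = (b:ℂ)^(w+v-1) * (Complex.Gamma w * Complex.Gamma v / Complex.Gamma (w+v)) := by
  have h1 : ∫ x in Set.Ioo (0:ℝ) b, (x:ℂ)^(w-1) * ((b:ℂ)-x)^(v-1)
      = ∫ x in (0:ℝ)..b, (x:ℂ)^(w-1) * ((b:ℂ)-x)^(v-1) := by
    rw [intervalIntegral.integral_of_le hb.le, MeasureTheory.integral_Ioc_eq_integral_Ioo]
  rw [h1, Complex.betaIntegral_scaled w v hb]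
  congr 1
  have h2 := Complex.Gamma_mul_Gamma_eq_betaIntegral hw hv
  have h3 : Complex.Gamma (w+v) ≠ 0 :=
    Complex.Gamma_ne_zero_of_re_pos (by simp only [Complex.add_re]; positivity)
  rw [eq_div_iff h3, h2]
  ring


/-- Mellin-type integral of a Jacobi polynomial against `x^{z−1}(b−x)^{μ−1}` on `(0,b)`,
expressed as a terminating `₃F₂`-type sum. -/
theorem stmt_8 (n : ℕ) (b : ℝ) (hb : 0 < b) (γ α β : ℂ)
    (hα : ∀ l : ℕ, l < n → α + 1 + (l : ℂ) ≠ 0)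
    (z μ : ℂ) (hz : 0 < z.re) (hμ : 0 < μ.re) :
    ∫ x in Set.Ioo (0 : ℝ) b,
        Complex.exp ((z - 1) * Real.log x) * Complex.exp ((μ - 1) * Real.log (b - x)) *
          jacobiP n α β (1 - γ * x) =
      pochN (α + 1) n * Complex.Gamma μ * Complex.Gamma z *
          (b : ℂ) ^ (z + μ - 1) / ((Nat.factorial n : ℂ) * Complex.Gamma (μ + z)) *
        ∑ k ∈ Finset.range (n + 1),
          (pochN (-(n : ℂ)) k * pochN ((n : ℂ) + α + β + 1) k * pochN z k) /
              (pochN (α + 1) k * pochN (μ + z) k * (Nat.factorial k : ℂ)) *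
            (γ * b / 2) ^ k := by
  have hbC : (b:ℂ) ≠ 0 := Complex.ofReal_ne_zero.mpr hb.ne'
  have hzk : ∀ k : ℕ, 0 < (z + (k:ℂ)).re := fun k => by
    simp only [Complex.add_re, Complex.natCast_re]
    have : (0:ℝ) ≤ (k:ℝ) := Nat.cast_nonneg k
    linarith
  have hμz : 0 < (μ + z).re := by
    simp only [Complex.add_re]
    linarith
  have hcong : Set.EqOn
      (fun x : ℝ => Complex.exp ((z - 1) * Real.log x) *
        Complex.exp ((μ - 1) * Real.log (b - x)) * jacobiP n α β (1 - γ * x))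
      (fun x : ℝ => ∑ k ∈ Finset.range (n+1),
        (pochN (α+1) n * pochN (-(n:ℂ)) k * pochN ((n:ℂ)+α+β+1) k
            / ((n.factorial : ℂ) * pochN (α+1) k * (k.factorial : ℂ)) * (γ/2)^k)
          * ((x:ℂ)^(z + (k:ℂ) - 1) * ((b:ℂ) - (x:ℂ))^(μ-1)))
      (Set.Ioo 0 b) := by
    intro x hx
    obtain ⟨hx0, hxb⟩ := hx
    simp only
    have hxC : (x:ℂ) ≠ 0 := Complex.ofReal_ne_zero.mpr hx0.ne'
    have e1 : Complex.exp ((z - 1) * Real.log x) = (x:ℂ)^(z-1) := by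
      rw [Complex.cpow_def_of_ne_zero hxC, ← Complex.ofReal_log hx0.le, mul_comm]
    have e2 : Complex.exp ((μ - 1) * Real.log (b - x)) = ((b:ℂ) - (x:ℂ))^(μ-1) := by
      have hbx : (0:ℝ) < b - x := by linarith
      have : ((b - x : ℝ) : ℂ) = (b:ℂ) - (x:ℂ) := by push_cast; ring
      rw [← this, Complex.cpow_def_of_ne_zero (Complex.ofReal_ne_zero.mpr hbx.ne'),
        ← Complex.ofReal_log hbx.le, mul_comm]
    have e3 : jacobiP n α β (1 - γ * x)
        = ∑ k ∈ Finset.range (n+1),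
            pochN (α+1) n * pochN (-(n:ℂ)) k * pochN ((n:ℂ)+α+β+1) k
              / ((n.factorial : ℂ) * pochN (α+1) k * (k.factorial : ℂ)) * (γ*(x:ℂ)/2)^k := by
      rw [show (1:ℂ) - γ*(x:ℂ) = 1 - 2*(γ*(x:ℂ)/2) by ring]
      exact jacobi_expand n α β hα (γ*(x:ℂ)/2)
    rw [e1, e2, e3, Finset.mul_sum]
    refine Finset.sum_congr rfl fun k hk => ?_
    have e4 : (γ*(x:ℂ)/2)^k = (γ/2)^k * (x:ℂ)^k := by
      rw [show γ*(x:ℂ)/2 = (γ/2)*(x:ℂ) by ring, mul_pow]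
    have e5 : (x:ℂ)^(z + (k:ℂ) - 1) = (x:ℂ)^(z-1) * (x:ℂ)^k := by
      rw [show z + (k:ℂ) - 1 = (z-1) + (k:ℂ) by ring, Complex.cpow_add _ _ hxC,
        Complex.cpow_natCast]
    rw [e4, e5]
    ring
  rw [MeasureTheory.setIntegral_congr_fun measurableSet_Ioo hcong]
  rw [MeasureTheory.integral_finset_sum _ (fun k _ =>
    (beta_integrableOn hb (hzk k) hμ).const_mul _)]
  rw [Finset.mul_sum]
  refine Finset.sum_congr rfl fun k hk => ?_
  rw [Finset.mem_range, Nat.lt_succ_iff] at hk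
  rw [MeasureTheory.integral_const_mul, beta_eval hb (hzk k) hμ]
  have g1 : Complex.Gamma (z + (k:ℂ)) = pochN z k * Complex.Gamma z := Gamma_shift hz k
  have g2 : Complex.Gamma (z + (k:ℂ) + μ) = pochN (μ+z) k * Complex.Gamma (μ+z) := by
    rw [show z + (k:ℂ) + μ = (μ+z) + (k:ℂ) by ring]
    exact Gamma_shift hμz k
  have g3 : (b:ℂ)^(z + (k:ℂ) + μ - 1) = (b:ℂ)^(z+μ-1) * (b:ℂ)^k := by
    rw [show z + (k:ℂ) + μ - 1 = (z+μ-1) + (k:ℂ) by ring, Complex.cpow_add _ _ hbC,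
      Complex.cpow_natCast]
  have g4 : (γ*(b:ℂ)/2)^k = (γ/2)^k * (b:ℂ)^k := by
    rw [show γ*(b:ℂ)/2 = (γ/2)*(b:ℂ) by ring, mul_pow]
  have hΓ : Complex.Gamma (μ+z) ≠ 0 := Complex.Gamma_ne_zero_of_re_pos hμz
  have hpμz : pochN (μ+z) k ≠ 0 := by
    refine pochN_ne_zero fun i hi => ?_
    intro h
    have := congrArg Complex.re h
    simp only [Complex.add_re, Complex.natCast_re, Complex.zero_re] at this
    have : (0:ℝ) ≤ (i:ℝ) := Nat.cast_nonneg i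
    linarith [congrArg Complex.re h, (by simp [Complex.add_re] :
      ((μ+z+(i:ℂ)).re = μ.re + z.re + (i:ℝ)))]
  have hpα : pochN (α+1) k ≠ 0 :=
    pochN_ne_zero fun i hi => hα i (lt_of_lt_of_le hi hk)
  rw [g1, g2, g3, g4]
  field_simp


end

end Stmt8
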